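/- Let n ≥ 2 be an integer and 0 < η < 1. There exists a constant c > 0 such that for every real λ ≥ 2, Σ_{j∈ℤⁿ, |j|<λ} Σ_{k∈ℤⁿ, |k|≥λ} (1+|k−j|)^{−n+2−η} / (|k|² − |j|²) ≥ c·λ^{n−η}, where the double sum of nonnegative terms is taken in the extended nonnegative reals [0, ∞]. -/

import Mathlib

set_option maxHeartbeats 1000000


/-- Euclidean norm of a lattice point in `ℤⁿ`, regarded as a point of `ℝⁿ`. -/
noncomputable def znorm {n : ℕ} (j : Fin n → ℤ) : ℝ := Real.sqrt (∑ i, ((j i : ℝ)) ^ 2)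

theorem stmt_8 (n : ℕ) (hn : 2 ≤ n) (η : ℝ) (hη : η ∈ Set.Ioo (0:ℝ) 1) :
    ∃ c : ℝ, 0 < c ∧ ∀ lam : ℝ, 2 ≤ lam →
      ENNReal.ofReal (c * lam ^ ((n : ℝ) - η)) ≤
        ∑' j : Fin n → ℤ, ∑' k : Fin n → ℤ,
          if znorm j < lam ∧ lam ≤ znorm k then
            ENNReal.ofReal
              ((1 + znorm (k - j)) ^ (-(n : ℝ) + 2 - η) / (znorm k ^ 2 - znorm j ^ 2))
          else 0 := by
  obtain ⟨hη0, hη1⟩ := hη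
  have hn0 : (0:ℝ) < n := by positivity
  have hn1 : (1:ℝ) ≤ n := by exact_mod_cast Nat.one_le_of_lt hn
  have hn2 : (2:ℝ) ≤ n := by exact_mod_cast hn
  set s : ℝ := Real.sqrt n with hs
  have hs0 : 0 < s := Real.sqrt_pos.mpr hn0
  have hs1 : 1 ≤ s := by
    rw [hs, show (1:ℝ) = Real.sqrt 1 by simp]
    exact Real.sqrt_le_sqrt hn1
  have hs2 : s ^ 2 = n := Real.sq_sqrt hn0.le
  set e : ℝ := -(n:ℝ) + 2 - η with he_def
  have he : e ≤ 0 := by simp only [he_def]; linarith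
  refine ⟨(4*s) ^ e / (9 * n * s ^ n), by positivity, ?_⟩
  intro lam hlam
  have hlam0 : (0:ℝ) < lam := by linarith
  set M : ℤ := ⌈lam / s⌉ with hM_def
  set N : ℤ := ⌈lam⌉ with hN_def
  have hMpos : 0 < M := Int.ceil_pos.mpr (by positivity)
  have hNpos : 0 < N := Int.ceil_pos.mpr hlam0
  have hMle : lam / s ≤ (M:ℝ) := Int.le_ceil _
  have hNle : lam ≤ (N:ℝ) := Int.le_ceil _
  have hMlt : (M:ℝ) - 1 < lam / s := by
    have := Int.ceil_lt_add_one (lam / s); rw [← hM_def] at this; linarith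
  have hNlt : (N:ℝ) < lam + 1 := by
    have := Int.ceil_lt_add_one lam; rw [← hN_def] at this; linarith
  have hMN : M ≤ N := Int.ceil_le_ceil (by
    rw [div_le_iff₀ hs0]; nlinarith)
  set J : Finset (Fin n → ℤ) := Fintype.piFinset fun _ => Finset.Ico 0 M with hJ_def
  set K : Finset (Fin n → ℤ) := Fintype.piFinset fun _ => Finset.Ico N (2*N) with hK_def
  set t : ℝ := (4*s*lam) ^ e / (9 * n * lam ^ 2) with ht_def
  have ht0 : 0 ≤ t := by positivity
  -- cardinalities
  have hJcard : J.card = M.toNat ^ n := by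
    simp [hJ_def, Fintype.card_piFinset, Int.card_Ico]
  have hKcard : K.card = N.toNat ^ n := by
    simp [hK_def, Fintype.card_piFinset, Int.card_Ico, two_mul]
  have hMtoNat : lam / s ≤ (M.toNat : ℝ) := by
    have h := Int.toNat_of_nonneg hMpos.le
    rw [← h] at hMle; exact_mod_cast hMle
  have hNtoNat : lam ≤ (N.toNat : ℝ) := by
    have h := Int.toNat_of_nonneg hNpos.le
    rw [← h] at hNle; exact_mod_cast hNle
  -- per-term lower bound
  have hterm : ∀ j ∈ J, ∀ k ∈ K,
      ENNReal.ofReal t ≤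
        (if znorm j < lam ∧ lam ≤ znorm k then
          ENNReal.ofReal
            ((1 + znorm (k - j)) ^ (-(n : ℝ) + 2 - η) / (znorm k ^ 2 - znorm j ^ 2))
        else 0) := by
    intro j hj k hk
    simp only [hJ_def, hK_def, Fintype.mem_piFinset, Finset.mem_Ico] at hj hk
    have hj' : ∀ i, (0:ℝ) ≤ (j i : ℝ) ∧ (j i : ℝ) ≤ (M:ℝ) - 1 := by
      intro i
      obtain ⟨h1, h2⟩ := hj i
      constructor
      · exact_mod_cast h1
      · have : j i ≤ M - 1 := by omega
        exact_mod_cast this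
    have hk' : ∀ i, lam ≤ (k i : ℝ) ∧ (k i : ℝ) < 3 * lam := by
      intro i
      obtain ⟨h1, h2⟩ := hk i
      constructor
      · calc lam ≤ (N:ℝ) := hNle
          _ ≤ (k i : ℝ) := by exact_mod_cast h1
      · calc (k i : ℝ) < 2 * (N:ℝ) := by exact_mod_cast h2
          _ < 2 * (lam + 1) := by linarith
          _ ≤ 3 * lam := by linarith
    have hM1 : (1:ℝ) ≤ (M:ℝ) := by exact_mod_cast hMpos
    have hSj : ∑ i, ((j i : ℝ)) ^ 2 < lam ^ 2 := by
      have hnn : (0:ℝ) ≤ (M:ℝ) - 1 := by linarith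
      calc ∑ i, ((j i : ℝ)) ^ 2 ≤ ∑ _i : Fin n, ((M:ℝ) - 1) ^ 2 := by
            apply Finset.sum_le_sum
            intro i _
            have := hj' i
            nlinarith [this.1, this.2]
        _ = n * ((M:ℝ) - 1) ^ 2 := by simp [Finset.sum_const, Finset.card_univ, nsmul_eq_mul]
        _ < n * (lam / s) ^ 2 := by
            apply mul_lt_mul_of_pos_left _ hn0
            exact pow_lt_pow_left₀ hMlt hnn (by norm_num)
        _ = lam ^ 2 := by rw [div_pow, hs2]; field_simp
    have hSk_lo : lam ^ 2 ≤ ∑ i, ((k i : ℝ)) ^ 2 := by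
      calc lam ^ 2 = 1 * lam ^ 2 := by ring
        _ ≤ n * lam ^ 2 := by nlinarith
        _ = ∑ _i : Fin n, lam ^ 2 := by simp [Finset.sum_const, Finset.card_univ, nsmul_eq_mul]
        _ ≤ ∑ i, ((k i : ℝ)) ^ 2 := by
            apply Finset.sum_le_sum
            intro i _
            have := (hk' i).1
            nlinarith
    have hSk_hi : ∑ i, ((k i : ℝ)) ^ 2 ≤ 9 * n * lam ^ 2 := by
      calc ∑ i, ((k i : ℝ)) ^ 2 ≤ ∑ _i : Fin n, (3 * lam) ^ 2 := by
            apply Finset.sum_le_sum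
            intro i _
            have := hk' i
            nlinarith [this.1, this.2]
        _ = n * (3 * lam) ^ 2 := by simp [Finset.sum_const, Finset.card_univ, nsmul_eq_mul]
        _ = 9 * n * lam ^ 2 := by ring
    have hSd : ∑ i, (((k - j) i : ℝ)) ^ 2 ≤ 9 * n * lam ^ 2 := by
      calc ∑ i, (((k - j) i : ℝ)) ^ 2 ≤ ∑ _i : Fin n, (3 * lam) ^ 2 := by
            apply Finset.sum_le_sum
            intro i _
            have h1 := hj' i
            have h2 := hk' i
            have hMN' : (M:ℝ) ≤ (N:ℝ) := by exact_mod_cast hMN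
            have hkN : (N:ℝ) ≤ (k i : ℝ) := by exact_mod_cast (hk i).1
            have : (((k - j) i : ℤ) : ℝ) = (k i : ℝ) - (j i : ℝ) := by
              simp [Pi.sub_apply]
            rw [this]
            nlinarith [h1.1, h1.2, h2.1, h2.2, hNle]
        _ = n * (3 * lam) ^ 2 := by simp [Finset.sum_const, Finset.card_univ, nsmul_eq_mul]
        _ = 9 * n * lam ^ 2 := by ring
    have hznj : znorm j < lam := by
      rw [znorm, Real.sqrt_lt' hlam0]; exact hSj
    have hznk : lam ≤ znorm k := by
      rw [znorm, Real.le_sqrt hlam0.le (by positivity)]; exact hSk_lo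
    rw [if_pos ⟨hznj, hznk⟩]
    apply ENNReal.ofReal_le_ofReal
    have hzj2 : znorm j ^ 2 = ∑ i, ((j i : ℝ)) ^ 2 := Real.sq_sqrt (by positivity)
    have hzk2 : znorm k ^ 2 = ∑ i, ((k i : ℝ)) ^ 2 := Real.sq_sqrt (by positivity)
    have hD0 : 0 < znorm k ^ 2 - znorm j ^ 2 := by rw [hzj2, hzk2]; linarith
    have hDhi : znorm k ^ 2 - znorm j ^ 2 ≤ 9 * n * lam ^ 2 := by
      rw [hzj2, hzk2]
      have : (0:ℝ) ≤ ∑ i, ((j i : ℝ)) ^ 2 := by positivity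
      linarith
    have hzd : znorm (k - j) ≤ 3 * s * lam := by
      rw [znorm]
      have h9 : (9:ℝ) * n * lam ^ 2 = (3 * s * lam) ^ 2 := by
        rw [mul_pow, mul_pow, hs2]; ring
      calc Real.sqrt (∑ i, (((k - j) i : ℝ)) ^ 2)
          ≤ Real.sqrt ((3 * s * lam) ^ 2) := Real.sqrt_le_sqrt (by rw [← h9]; exact hSd)
        _ = 3 * s * lam := Real.sqrt_sq (by positivity)
    have hnum : (4 * s * lam) ^ e ≤ (1 + znorm (k - j)) ^ (-(n:ℝ) + 2 - η) := by
      rw [← he_def]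
      apply Real.rpow_le_rpow_of_nonpos
      · have : 0 ≤ znorm (k - j) := Real.sqrt_nonneg _
        linarith
      · have : (1:ℝ) ≤ s * lam := by nlinarith
        linarith
      · exact he
    rw [ht_def]
    have h1z : (0:ℝ) < 1 + znorm (k - j) := by
      have := Real.sqrt_nonneg (∑ i, (((k - j) i : ℝ)) ^ 2)
      rw [znorm]; linarith
    exact div_le_div₀ (Real.rpow_pos_of_pos h1z _).le hnum hD0 hDhi
  -- now the summation chain
  calc ENNReal.ofReal ((4*s) ^ e / (9 * n * s ^ n) * lam ^ ((n:ℝ) - η))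
      ≤ ENNReal.ofReal (((M.toNat ^ n * N.toNat ^ n : ℕ) : ℝ) * t) := by
        apply ENNReal.ofReal_le_ofReal
        have hfac : (4 * s * lam) ^ e = (4 * s) ^ e * lam ^ e :=
          Real.mul_rpow (by positivity) hlam0.le
        have hcollect : lam ^ n * lam ^ n * lam ^ e = lam ^ ((n:ℝ) - η) * lam ^ 2 := by
          rw [← Real.rpow_natCast lam n, ← Real.rpow_natCast lam 2,
            ← Real.rpow_add hlam0, ← Real.rpow_add hlam0, ← Real.rpow_add hlam0]
          congr 1
          push_cast [he_def]
          ring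
        have h1 : (lam / s) ^ n * lam ^ n * t = (4*s) ^ e / (9 * n * s ^ n) * lam ^ ((n:ℝ) - η) := by
          have hsn : s ^ n ≠ 0 := by positivity
          have h9n : (9:ℝ) * (n:ℝ) ≠ 0 := by positivity
          have hl2 : lam ^ 2 ≠ 0 := by positivity
          calc (lam / s) ^ n * lam ^ n * t
              = (lam ^ n * lam ^ n * lam ^ e) * (4*s) ^ e / (s ^ n * (9 * n) * lam ^ 2) := by
                rw [ht_def, hfac, div_pow]; ring
            _ = (lam ^ ((n:ℝ) - η) * lam ^ 2) * (4*s) ^ e / (s ^ n * (9 * n) * lam ^ 2) := by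
                rw [hcollect]
            _ = (4*s) ^ e / (9 * n * s ^ n) * lam ^ ((n:ℝ) - η) := by
                field_simp
        calc (4*s) ^ e / (9 * n * s ^ n) * lam ^ ((n:ℝ) - η)
            = (lam / s) ^ n * lam ^ n * t := h1.symm
          _ ≤ ((M.toNat:ℝ)) ^ n * ((N.toNat:ℝ)) ^ n * t := by
              have h2 : (lam / s) ^ n ≤ ((M.toNat:ℝ)) ^ n :=
                pow_le_pow_left₀ (by positivity) hMtoNat n
              have h3 : lam ^ n ≤ ((N.toNat:ℝ)) ^ n :=
                pow_le_pow_left₀ hlam0.le hNtoNat n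
              exact mul_le_mul (mul_le_mul h2 h3 (by positivity) (by positivity)) le_rfl ht0
                (by positivity)
          _ = ((M.toNat ^ n * N.toNat ^ n : ℕ) : ℝ) * t := by push_cast; ring
    _ = ∑ j ∈ J, ∑ k ∈ K, ENNReal.ofReal t := by
        rw [Finset.sum_const, Finset.sum_const, nsmul_eq_mul, nsmul_eq_mul, hJcard, hKcard,
          ENNReal.ofReal_mul (by positivity), ENNReal.ofReal_natCast]
        push_cast
        ring
    _ ≤ ∑ j ∈ J, ∑ k ∈ K,
          (if znorm j < lam ∧ lam ≤ znorm k then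
            ENNReal.ofReal
              ((1 + znorm (k - j)) ^ (-(n : ℝ) + 2 - η) / (znorm k ^ 2 - znorm j ^ 2))
          else 0) := by
        apply Finset.sum_le_sum
        intro j hj
        apply Finset.sum_le_sum
        intro k hk
        exact hterm j hj k hk
    _ ≤ ∑' j : Fin n → ℤ, ∑' k : Fin n → ℤ,
          (if znorm j < lam ∧ lam ≤ znorm k then
            ENNReal.ofReal
              ((1 + znorm (k - j)) ^ (-(n : ℝ) + 2 - η) / (znorm k ^ 2 - znorm j ^ 2))
          else 0) := by
        refine le_trans (Finset.sum_le_sum fun j _ =>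
          Summable.sum_le_tsum K (fun _ _ => zero_le') ENNReal.summable) ?_
        exact Summable.sum_le_tsum J (fun _ _ => zero_le') ENNReal.summable
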